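/- Let l be a {0,1}-valued stochastic process with partial sums L(k) = ∑_{i=0}^{k-1} l(i) satisfying limsup_{k→∞} L(k)/k ≤ ρ almost surely, where ρ ∈ [0,1]. Let β ∈ (0,1) and φ ∈ [1,∞) satisfy (1−ρ)·ln β + ρ·ln φ < 0. Then the random products η(k) := ∏_{i=0}^{k-1} ( (1 − l(i))·β + l(i)·φ ) converge to 0 almost surely as k → ∞; in fact, almost surely limsup_{k→∞} (ln η(k))/k ≤ (1−ρ)·ln β + ρ·ln φ < 0. -/

import Mathlib

open MeasureTheory Filter

/-- if the long-run loss ratio is at most `ρ` a.s. and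
`(1−ρ)·ln β + ρ·ln φ < 0`, then the products
`η(k) = ∏_{i<k} ((1−l(i))β + l(i)φ)` tend to `0` almost surely, and in fact
a.s. `limsup_k (ln η(k))/k ≤ (1−ρ)·ln β + ρ·ln φ`. -/
theorem lyapunov_products_tendsto_zero
    {Ω : Type*} [MeasurableSpace Ω] (μ : Measure Ω) [IsProbabilityMeasure μ]
    (l : ℕ → Ω → ℝ)
    (h01 : ∀ i ω, l i ω = 0 ∨ l i ω = 1)
    (ρ : ℝ) (hρ : ρ ∈ Set.Icc (0 : ℝ) 1)
    (hlim : ∀ᵐ ω ∂μ,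
      limsup (fun k : ℕ => (∑ i ∈ Finset.range k, l i ω) / k) atTop ≤ ρ)
    (β φ : ℝ) (hβ : β ∈ Set.Ioo (0 : ℝ) 1) (hφ : 1 ≤ φ)
    (hrate : (1 - ρ) * Real.log β + ρ * Real.log φ < 0) :
    ∀ᵐ ω ∂μ,
      Tendsto (fun k : ℕ =>
          ∏ i ∈ Finset.range k, ((1 - l i ω) * β + l i ω * φ)) atTop (nhds 0) ∧
      limsup (fun k : ℕ =>
          Real.log (∏ i ∈ Finset.range k, ((1 - l i ω) * β + l i ω * φ)) / k) atTop
        ≤ (1 - ρ) * Real.log β + ρ * Real.log φ := by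
  obtain ⟨hβ0, hβ1⟩ := hβ
  have hφ0 : (0 : ℝ) < φ := lt_of_lt_of_le one_pos hφ
  have hlogβ : Real.log β < 0 := Real.log_neg hβ0 hβ1
  have hlogφ : 0 ≤ Real.log φ := Real.log_nonneg hφ
  set c : ℝ := Real.log φ - Real.log β with hc
  have hcpos : 0 < c := by simp only [hc]; linarith
  set T : ℝ := (1 - ρ) * Real.log β + ρ * Real.log φ with hT
  have hTc : Real.log β + ρ * c = T := by simp only [hT, hc]; ring
  filter_upwards [hlim] with ω hω
  -- positivity of factors
  have hpos : ∀ i, 0 < (1 - l i ω) * β + l i ω * φ := by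
    intro i
    rcases h01 i ω with h | h <;> simp [h] <;> assumption
  have hprodpos : ∀ k, 0 < ∏ i ∈ Finset.range k, ((1 - l i ω) * β + l i ω * φ) :=
    fun k => Finset.prod_pos fun i _ => hpos i
  -- the log of the product
  have hlogprod : ∀ k : ℕ,
      Real.log (∏ i ∈ Finset.range k, ((1 - l i ω) * β + l i ω * φ))
        = (k : ℝ) * Real.log β + (∑ i ∈ Finset.range k, l i ω) * c := by
    intro k
    rw [Real.log_prod fun i _ => (hpos i).ne']
    have hterm : ∀ i, Real.log ((1 - l i ω) * β + l i ω * φ)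
        = Real.log β + l i ω * c := by
      intro i
      rcases h01 i ω with h | h <;> simp [h, hc] <;> ring
    simp only [hterm, Finset.sum_add_distrib, Finset.sum_const, Finset.card_range,
      nsmul_eq_mul, ← Finset.sum_mul]
  set L : ℕ → ℝ := fun k => ∑ i ∈ Finset.range k, l i ω with hL
  have hL0 : ∀ k, 0 ≤ L k := fun k =>
    Finset.sum_nonneg fun i _ => by rcases h01 i ω with h | h <;> simp [h]
  have hLk : ∀ k : ℕ, L k ≤ k := by
    intro k
    calc L k ≤ ∑ i ∈ Finset.range k, 1 :=
      Finset.sum_le_sum fun i _ => by rcases h01 i ω with h | h <;> simp [h]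
    _ = k := by simp
  set f : ℕ → ℝ := fun k =>
    Real.log (∏ i ∈ Finset.range k, ((1 - l i ω) * β + l i ω * φ)) / k with hf
  have hfk : ∀ k : ℕ, 1 ≤ k → f k = Real.log β + (L k / k) * c := by
    intro k hk
    have hk0 : (k : ℝ) ≠ 0 := Nat.cast_ne_zero.mpr (by omega)
    simp only [hf, hlogprod k]
    field_simp
    ring
  have hratio : ∀ k : ℕ, L k / k ≤ 1 := by
    intro k
    rcases Nat.eq_zero_or_pos k with rfl | hk
    · simp
    · exact div_le_one_of_le₀ (hLk k) (Nat.cast_nonneg k)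
  have hratio0 : ∀ k : ℕ, 0 ≤ L k / k := fun k =>
    div_nonneg (hL0 k) (Nat.cast_nonneg k)
  -- bounds on f
  have hfub : ∀ᶠ k in atTop, f k ≤ Real.log φ := by
    filter_upwards [eventually_ge_atTop 1] with k hk
    rw [hfk k hk]
    have := mul_le_of_le_one_left hcpos.le (hratio k)
    nlinarith [hratio k]
  have hflb : ∀ᶠ k in atTop, Real.log β ≤ f k := by
    filter_upwards [eventually_ge_atTop 1] with k hk
    rw [hfk k hk]
    nlinarith [hratio0 k]
  have hbddabove : IsBoundedUnder (· ≤ ·) atTop f := ⟨Real.log φ, hfub⟩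
  have hcobdd : IsCoboundedUnder (· ≤ ·) atTop f :=
    IsBoundedUnder.isCoboundedUnder_le ⟨Real.log β, hflb⟩
  -- the main limsup bound
  have key : limsup f atTop ≤ T := by
    apply le_of_forall_pos_le_add
    intro δ hδ
    have hε : 0 < δ / c := div_pos hδ hcpos
    have hlt : limsup (fun k : ℕ => L k / k) atTop < ρ + δ / c :=
      lt_of_le_of_lt hω (by linarith)
    have hevρ : ∀ᶠ k in atTop, L k / k < ρ + δ / c :=
      eventually_lt_of_limsup_lt hlt (isBoundedUnder_of ⟨1, hratio⟩)
    have hev : ∀ᶠ k in atTop, f k ≤ T + δ := by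
      filter_upwards [hevρ, eventually_ge_atTop 1] with k hk hk1
      rw [hfk k hk1]
      have : L k / k * c ≤ (ρ + δ / c) * c := by nlinarith
      have hδc : (δ / c) * c = δ := div_mul_cancel₀ δ hcpos.ne'
      nlinarith
    exact limsup_le_of_le hcobdd hev
  refine ⟨?_, key⟩
  -- convergence to 0
  have hT2 : limsup f atTop < T / 2 := lt_of_le_of_lt key (by linarith)
  have hev2 : ∀ᶠ k in atTop, f k < T / 2 := eventually_lt_of_limsup_lt hT2 hbddabove
  have hg : Tendsto (fun k : ℕ => Real.exp (T / 2 * k)) atTop (nhds 0) := by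
    apply Real.tendsto_exp_atBot.comp
    exact (tendsto_const_mul_atBot_of_neg (by linarith)).mpr tendsto_natCast_atTop_atTop
  apply squeeze_zero' (Eventually.of_forall fun k => (hprodpos k).le) _ hg
  filter_upwards [hev2, eventually_ge_atTop 1] with k hk hk1
  have hk0 : (0 : ℝ) < k := by exact_mod_cast Nat.pos_of_ne_zero (by omega)
  have hlog : Real.log (∏ i ∈ Finset.range k, ((1 - l i ω) * β + l i ω * φ))
      < T / 2 * k := by
    have := (div_lt_iff₀ hk0).mp hk
    linarith
  calc (∏ i ∈ Finset.range k, ((1 - l i ω) * β + l i ω * φ))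
      = Real.exp (Real.log (∏ i ∈ Finset.range k, ((1 - l i ω) * β + l i ω * φ))) :=
        (Real.exp_log (hprodpos k)).symm
    _ ≤ Real.exp (T / 2 * k) := Real.exp_le_exp.mpr hlog.le
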